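/- Let G act on a set Γ, and let φ₀, φ₁ ∈ Γ. If there is no u ∈ G with u·φ₁ = φ₀, then H = Stab_G(φ₀) × Stab_G(φ₁) × {0} is a subgroup of G ≀ ℤ₂, and the function f : G ≀ ℤ₂ → Γ × Γ defined by f(g₁,g₂,0) = (g₁·φ₀, g₂·φ₁) and f(g₁,g₂,1) = (g₂·φ₁, g₁·φ₀) is constant on left cosets of H and distinct on distinct left cosets of H. -/
import Mathlib


/-- Multiplication of the wreath product `G ≀ ℤ₂` on `G × G × ZMod 2`. -/
def wmul {G : Type*} [Group G] (x y : G × G × ZMod 2) : G × G × ZMod 2 :=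
  if y.2.2 = 0 then (x.1 * y.1, x.2.1 * y.2.1, x.2.2 + y.2.2)
  else (x.2.1 * y.1, x.1 * y.2.1, x.2.2 + y.2.2)

/-- Inversion in the wreath product `G ≀ ℤ₂`. -/
def winv {G : Type*} [Group G] (x : G × G × ZMod 2) : G × G × ZMod 2 :=
  if x.2.2 = 0 then (x.1⁻¹, x.2.1⁻¹, -x.2.2) else (x.2.1⁻¹, x.1⁻¹, -x.2.2)


/-- The function `f : G ≀ ℤ₂ → Γ × Γ` with `f(g₁,g₂,0) = (g₁·φ₀, g₂·φ₁)` and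
`f(g₁,g₂,1) = (g₂·φ₁, g₁·φ₀)`. -/
def hidea {G Γ : Type*} [Group G] [MulAction G Γ] (φ₀ φ₁ : Γ) (x : G × G × ZMod 2) : Γ × Γ :=
  if x.2.2 = 0 then (x.1 • φ₀, x.2.1 • φ₁) else (x.2.1 • φ₁, x.1 • φ₀)

/-- The set `Stab_G(φ₀) × Stab_G(φ₁) × {0}` inside `G ≀ ℤ₂`. -/
def stabSet {G Γ : Type*} [Group G] [MulAction G Γ] (φ₀ φ₁ : Γ) : Set (G × G × ZMod 2) :=
  {x | x.2.2 = 0 ∧ x.1 • φ₀ = φ₀ ∧ x.2.1 • φ₁ = φ₁}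

/-- If no `u ∈ G` sends `φ₁` to `φ₀`, then
`H = Stab_G(φ₀) × Stab_G(φ₁) × {0}` is a subgroup of `G ≀ ℤ₂` and the function `hidea φ₀ φ₁`
is constant on left cosets of `H` and distinct on distinct left cosets
(`f x = f y ↔ x⁻¹y ∈ H`). -/
theorem stmt10 {G Γ : Type*} [Group G] [Fintype G] [MulAction G Γ] (φ₀ φ₁ : Γ)
    (hdisj : ¬∃ u : G, u • φ₁ = φ₀) :
    (((1, 1, 0) : G × G × ZMod 2) ∈ stabSet φ₀ φ₁ ∧
      (∀ x ∈ stabSet φ₀ φ₁, ∀ y ∈ stabSet φ₀ φ₁, wmul x y ∈ stabSet (G := G) φ₀ φ₁) ∧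
      (∀ x ∈ stabSet φ₀ φ₁, winv x ∈ stabSet (G := G) φ₀ φ₁)) ∧
    (∀ x y : G × G × ZMod 2,
      hidea φ₀ φ₁ x = hidea φ₀ φ₁ y ↔ wmul (winv x) y ∈ stabSet φ₀ φ₁) := by
  have h2 : ∀ s : ZMod 2, s = 0 ∨ s = 1 := by decide
  constructor
  · refine ⟨⟨rfl, one_smul _ _, one_smul _ _⟩, ?_, ?_⟩
    · rintro ⟨a, b, s⟩ ⟨hs, ha, hb⟩ ⟨c, d, t⟩ ⟨ht, hc, hd⟩
      simp only at hs ht ha hb hc hd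
      subst hs ht
      refine ⟨rfl, ?_, ?_⟩ <;> simp [wmul, mul_smul, ha, hb, hc, hd]
    · rintro ⟨a, b, s⟩ ⟨hs, ha, hb⟩
      simp only at hs ha hb
      subst hs
      refine ⟨by simp [winv], ?_, ?_⟩ <;>
        simp [winv, inv_smul_eq_iff, ha, hb]
  · rintro ⟨a, b, s⟩ ⟨c, d, t⟩
    rcases h2 s with hs | hs <;> rcases h2 t with ht | ht <;> subst hs ht <;>
      simp only [hidea, winv, wmul, stabSet, Set.mem_setOf_eq] <;> norm_num <;>
      (try simp only [mul_smul, inv_smul_eq_iff, Prod.ext_iff])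
    · exact and_congr eq_comm eq_comm
    · intro h1 _
      exact hdisj ⟨a⁻¹ * d, by rw [mul_smul, ← h1, inv_smul_smul]⟩
    · intro h2 _
      exact hdisj ⟨c⁻¹ * b, by rw [mul_smul, h2, inv_smul_smul]⟩
    · exact ⟨fun h => ⟨h.2.symm, h.1.symm⟩, fun h => ⟨h.2.symm, h.1.symm⟩⟩
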